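/- Let n ≥ 2, let ξ ∈ ℝⁿ with ξ' ≠ 0, and let τ ≥ |ξ|/2 be a positive real. Set μ₁ := −(ξ_n/|ξ|) e(1) + (|ξ'|/|ξ|) e_n and let μ₂ ∈ ℝⁿ be any unit vector orthogonal to both ξ and μ₁ whose last coordinate is zero. Define ρ₁ := (i/(2τ)) ξ + i√(1 − |ξ|²/(4τ²)) μ₁ + μ₂ and ρ₂ := −(i/(2τ)) ξ + i√(1 − |ξ|²/(4τ²)) μ₁ − μ₂ in ℂⁿ. Then: τ(ρ₁ + conj(ρ₂*)) = i (ξ', 2√(τ² − |ξ|²/4) · |ξ'|/|ξ|), τ(ρ₁* + conj(ρ₂)) = i (ξ', −2√(τ² − |ξ|²/4) · |ξ'|/|ξ|), and τ(ρ₁* + conj(ρ₂*)) = i ξ*, where conj denotes componentwise complex conjugation. -/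

import Mathlib

open MeasureTheory Filter Complex
open scoped ENNReal RealInnerProductSpace

noncomputable section

/-- Reflection `x* = (x', -x_n)` of a point in `ℝⁿ`. -/
def reflVec (n : ℕ) (x : EuclideanSpace ℝ (Fin n)) : EuclideanSpace ℝ (Fin n) :=
  WithLp.toLp 2 fun i => if (i : ℕ) = n - 1 then -x i else x i

/-- Reflection `ρ* = (Re ρ)* + i (Im ρ)*` of a complex vector: the sign of the last
coordinate is flipped. -/
def creflVec (n : ℕ) (ρ : EuclideanSpace ℂ (Fin n)) : EuclideanSpace ℂ (Fin n) :=
  WithLp.toLp 2 fun i => if (i : ℕ) = n - 1 then -ρ i else ρ i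

/-- The last index of `Fin n` (i.e. the `n`-th coordinate). -/
def lastIdx (n : ℕ) (hn : 0 < n) : Fin n := ⟨n - 1, Nat.sub_lt hn one_pos⟩

/-- `|ξ'|`, the Euclidean norm of the first `n-1` coordinates of `ξ`. -/
def xiPrimeNorm (n : ℕ) (ξ : EuclideanSpace ℝ (Fin n)) : ℝ :=
  Real.sqrt (∑ i ∈ Finset.univ.filter (fun i : Fin n => (i : ℕ) < n - 1), ξ i ^ 2)

/-- `e(1) := (ξ'/|ξ'|, 0)`. -/
def eOneVec (n : ℕ) (ξ : EuclideanSpace ℝ (Fin n)) : EuclideanSpace ℝ (Fin n) :=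
  WithLp.toLp 2 fun i => if (i : ℕ) < n - 1 then ξ i / xiPrimeNorm n ξ else 0

/-- `μ₁ := -(ξ_n/|ξ|) e(1) + (|ξ'|/|ξ|) e_n`. -/
def muOneVec (n : ℕ) (hn : 0 < n) (ξ : EuclideanSpace ℝ (Fin n)) :
    EuclideanSpace ℝ (Fin n) :=
  (-(ξ (lastIdx n hn) / ‖ξ‖)) • eOneVec n ξ +
    (xiPrimeNorm n ξ / ‖ξ‖) • EuclideanSpace.single (lastIdx n hn) (1 : ℝ)

theorem stmt13 (n : ℕ) (hn : 2 ≤ n) (ξ : EuclideanSpace ℝ (Fin n))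
    (hξ' : xiPrimeNorm n ξ ≠ 0)
    (τ : ℝ) (hτ0 : 0 < τ) (hτ : ‖ξ‖ / 2 ≤ τ)
    (μ₁ μ₂ : EuclideanSpace ℝ (Fin n))
    (hμ₁def : μ₁ = muOneVec n (by omega) ξ)
    (hμ₂norm : ‖μ₂‖ = 1) (hμ₂ξ : ⟪ξ, μ₂⟫ = 0) (hμ₂μ₁ : ⟪μ₁, μ₂⟫ = 0)
    (hμ₂last : μ₂ (lastIdx n (by omega)) = 0)
    (ρ₁ ρ₂ : EuclideanSpace ℂ (Fin n))
    (hρ₁ : ∀ j, ρ₁ j = Complex.I / (2 * (τ : ℂ)) * (ξ j : ℂ) +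
      Complex.I * (Real.sqrt (1 - ‖ξ‖ ^ 2 / (4 * τ ^ 2)) : ℂ) * (μ₁ j : ℂ) + (μ₂ j : ℂ))
    (hρ₂ : ∀ j, ρ₂ j = -(Complex.I / (2 * (τ : ℂ))) * (ξ j : ℂ) +
      Complex.I * (Real.sqrt (1 - ‖ξ‖ ^ 2 / (4 * τ ^ 2)) : ℂ) * (μ₁ j : ℂ) - (μ₂ j : ℂ)) :
    (∀ j : Fin n, (τ : ℂ) * (ρ₁ j + starRingEnd ℂ (creflVec n ρ₂ j)) =
      Complex.I * ((if (j : ℕ) = n - 1 then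
        2 * Real.sqrt (τ ^ 2 - ‖ξ‖ ^ 2 / 4) * xiPrimeNorm n ξ / ‖ξ‖ else ξ j : ℝ) : ℂ)) ∧
    (∀ j : Fin n, (τ : ℂ) * (creflVec n ρ₁ j + starRingEnd ℂ (ρ₂ j)) =
      Complex.I * ((if (j : ℕ) = n - 1 then
        -(2 * Real.sqrt (τ ^ 2 - ‖ξ‖ ^ 2 / 4) * xiPrimeNorm n ξ / ‖ξ‖) else ξ j : ℝ) : ℂ)) ∧
    (∀ j : Fin n, (τ : ℂ) * (creflVec n ρ₁ j + starRingEnd ℂ (creflVec n ρ₂ j)) =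
      Complex.I * ((reflVec n ξ j : ℝ) : ℂ)) := by
  have hn1 : 0 < n := by omega
  have hτ' : (τ : ℂ) ≠ 0 := by exact_mod_cast hτ0.ne'
  set s : ℝ := Real.sqrt (1 - ‖ξ‖ ^ 2 / (4 * τ ^ 2)) with hsdef
  have key : τ * s = Real.sqrt (τ ^ 2 - ‖ξ‖ ^ 2 / 4) := by
    have h1 : τ ^ 2 - ‖ξ‖ ^ 2 / 4 = τ ^ 2 * (1 - ‖ξ‖ ^ 2 / (4 * τ ^ 2)) := by
      field_simp
    rw [h1, Real.sqrt_mul (sq_nonneg τ), Real.sqrt_sq hτ0.le, hsdef]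
  have hμ₁last : μ₁ (lastIdx n hn1) = xiPrimeNorm n ξ / ‖ξ‖ := by
    simp [hμ₁def, muOneVec, eOneVec, lastIdx, PiLp.add_apply, PiLp.smul_apply, PiLp.toLp_apply,
      EuclideanSpace.single_apply]
  have hμ₂l : μ₂ (lastIdx n hn1) = 0 := hμ₂last
  have hcρ₂ : ∀ j, (starRingEnd ℂ) (ρ₂ j) = Complex.I / (2 * (τ : ℂ)) * (ξ j : ℂ)
      - Complex.I * (s : ℂ) * (μ₁ j : ℂ) - (μ₂ j : ℂ) := by
    intro j
    rw [hρ₂ j]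
    simp only [map_add, map_sub, map_neg, map_mul, map_div₀, map_ofNat,
      Complex.conj_ofReal, Complex.conj_I]
    ring
  have hlv : ((lastIdx n hn1 : Fin n) : ℕ) = n - 1 := rfl
  have hhalf : (τ : ℂ) * (Complex.I / (2 * (τ : ℂ))) = Complex.I / 2 := by
    field_simp
  refine ⟨fun j => ?_, fun j => ?_, fun j => ?_⟩
  · by_cases hj : (j : ℕ) = n - 1
    · have hjl : j = lastIdx n hn1 := by
        apply Fin.ext; simpa [lastIdx] using hj
      subst hjl
      simp only [creflVec, PiLp.toLp_apply, hlv, if_pos, map_neg, hcρ₂, hρ₁, hμ₁last, hμ₂l, ← key]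
      push_cast
      ring
    · simp only [creflVec, PiLp.toLp_apply, hj, if_neg, not_false_iff, hcρ₂, hρ₁]
      field_simp
      ring
  · by_cases hj : (j : ℕ) = n - 1
    · have hjl : j = lastIdx n hn1 := by
        apply Fin.ext; simpa [lastIdx] using hj
      subst hjl
      simp only [creflVec, PiLp.toLp_apply, hlv, if_pos, map_neg, hcρ₂, hρ₁, hμ₁last, hμ₂l, ← key]
      push_cast
      ring
    · simp only [creflVec, PiLp.toLp_apply, hj, if_neg, not_false_iff, hcρ₂, hρ₁]
      field_simp
      ring
  · by_cases hj : (j : ℕ) = n - 1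
    · have hjl : j = lastIdx n hn1 := by
        apply Fin.ext; simpa [lastIdx] using hj
      subst hjl
      simp only [creflVec, PiLp.toLp_apply, reflVec, hlv, if_pos, map_neg, hcρ₂, hρ₁, hμ₁last, hμ₂l]
      push_cast
      linear_combination (-(Complex.I) * ((ξ (lastIdx n hn1) : ℝ) : ℂ)) *
        mul_inv_cancel₀ hτ'
    · simp only [creflVec, PiLp.toLp_apply, reflVec, hj, if_neg, not_false_iff, hcρ₂, hρ₁]
      field_simp
      ring
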